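/- Let D be a category that has all pullbacks. Then the Grothendieck twist Tw(D) has all pullbacks. -/

import Mathlib

open CategoryTheory CategoryTheory.Limits

universe v u

/-- An object of the Grothendieck twist `Tw(D)`: a finite index type together with a
family of objects of `D`. -/
structure TwObj (D : Type u) [Category.{v} D] : Type (max u 1) where
  ι : Type
  [fin : Finite ι]
  obj : ι → D

attribute [instance] TwObj.fin

/-- A morphism of the Grothendieck twist `Tw(D)`: a function of index types together with
componentwise morphisms of `D`. -/
structure TwHom {D : Type u} [Category.{v} D] (X Y : TwObj D) : Type (max v 1) where
  toFun : X.ι → Y.ι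
  map : ∀ i, X.obj i ⟶ Y.obj (toFun i)

theorem TwHom.hext {D : Type u} [Category.{v} D] {X Y : TwObj D} {f g : TwHom X Y}
    (h1 : f.toFun = g.toFun) (h2 : HEq f.map g.map) : f = g := by
  cases f; cases g; cases h1; cases h2; rfl

instance (D : Type u) [Category.{v} D] : Category (TwObj D) where
  Hom X Y := TwHom X Y
  id X := ⟨id, fun i => 𝟙 _⟩
  comp f g := ⟨g.toFun ∘ f.toFun, fun i => f.map i ≫ g.map (f.toFun i)⟩
  id_comp f := TwHom.hext rfl (heq_of_eq (funext fun i => Category.id_comp _))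
  comp_id f := TwHom.hext rfl (heq_of_eq (funext fun i => Category.comp_id _))
  assoc f g h := TwHom.hext rfl (heq_of_eq (funext fun i => Category.assoc _ _ _))

namespace TwPB

variable {D : Type u} [Category.{v} D]

theorem ext' {X Y : TwObj D} {f g : X ⟶ Y} (h1 : ∀ i, f.toFun i = g.toFun i)
    (h2 : ∀ i, f.map i ≫ eqToHom (congrArg Y.obj (h1 i)) = g.map i) : f = g := by
  obtain ⟨ft, fm⟩ := f; obtain ⟨gt, gm⟩ := g
  obtain rfl : ft = gt := funext h1
  have : fm = gm := by
    funext i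
    simpa using h2 i
  rw [this]

theorem map_heq {X Y : TwObj D} {f g : X ⟶ Y} (h : f = g) : HEq f.map g.map := by
  rw [h]

theorem map_eq' {X Y : TwObj D} {f g : X ⟶ Y} (h : f = g) (i : X.ι) :
    f.map i ≫ eqToHom (congrArg Y.obj (congrFun (congrArg TwHom.toFun h) i)) = g.map i := by
  subst h; simp

variable [HasPullbacks D] {X Y Z : TwObj D} (f : X ⟶ Z) (g : Y ⟶ Z)

/-- index type of the pullback -/
noncomputable def P : TwObj D :=
  { ι := {p : X.ι × Y.ι // f.toFun p.1 = g.toFun p.2}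
    obj := fun p => pullback (f.map p.1.1 ≫ eqToHom (congrArg Z.obj p.2)) (g.map p.1.2) }

noncomputable def pfst : P f g ⟶ X :=
  { toFun := fun p => p.1.1
    map := fun p => pullback.fst _ _ }

noncomputable def psnd : P f g ⟶ Y :=
  { toFun := fun p => p.1.2
    map := fun p => pullback.snd _ _ }

theorem pcond : pfst f g ≫ f = psnd f g ≫ g := by
  refine ext' (fun p => p.2) (fun p => ?_)
  show (pullback.fst _ _ ≫ f.map _) ≫ eqToHom _ = pullback.snd _ _ ≫ g.map _
  rw [Category.assoc]
  exact pullback.condition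

noncomputable def plift (s : PullbackCone f g) : s.pt ⟶ P f g :=
  { toFun := fun w => ⟨(s.fst.toFun w, s.snd.toFun w),
      congrFun (congrArg TwHom.toFun s.condition) w⟩
    map := fun w => pullback.lift (s.fst.map w) (s.snd.map w) (by
      rw [← Category.assoc]
      exact map_eq' s.condition w) }

noncomputable def pIsLimit : IsLimit (PullbackCone.mk (pfst f g) (psnd f g) (pcond f g)) := by
  refine PullbackCone.IsLimit.mk _ (fun s => plift f g s) (fun s => ?_) (fun s => ?_)
      (fun s m h1 h2 => ?_)
  · exact TwHom.hext rfl (heq_of_eq (funext fun w => pullback.lift_fst _ _ _))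
  · exact TwHom.hext rfl (heq_of_eq (funext fun w => pullback.lift_snd _ _ _))
  · obtain ⟨mt, mm⟩ := m
    have ht : mt = (plift f g s).toFun := by
      funext w
      apply Subtype.ext
      exact Prod.ext (congrFun (congrArg TwHom.toFun h1) w) (congrFun (congrArg TwHom.toFun h2) w)
    subst ht
    refine TwHom.hext rfl (heq_of_eq ?_)
    funext w
    apply pullback.hom_ext
    · show mm w ≫ pullback.fst _ _ = (plift f g s).map w ≫ pullback.fst _ _
      refine Eq.trans ?_ (pullback.lift_fst _ _ _).symm
      have hm : (TwHom.mk (plift f g s).toFun mm ≫ pfst f g).map = s.fst.map :=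
        eq_of_heq (map_heq h1)
      exact congrFun hm w
    · show mm w ≫ pullback.snd _ _ = (plift f g s).map w ≫ pullback.snd _ _
      refine Eq.trans ?_ (pullback.lift_snd _ _ _).symm
      have hm : (TwHom.mk (plift f g s).toFun mm ≫ psnd f g).map = s.snd.map :=
        eq_of_heq (map_heq h2)
      exact congrFun hm w

end TwPB

/-- If `D` has all pullbacks then the Grothendieck twist `Tw(D)` has all pullbacks. -/
theorem tw_hasPullbacks (D : Type u) [Category.{v} D] [HasPullbacks D] :
    HasPullbacks (TwObj D) := by
  have : ∀ {X Y Z : TwObj D} {f : X ⟶ Z} {g : Y ⟶ Z}, HasLimit (cospan f g) :=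
    fun {X Y Z f g} => HasLimit.mk ⟨_, TwPB.pIsLimit f g⟩
  exact hasPullbacks_of_hasLimit_cospan _
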